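/- Let ω = (ω_1,…,ω_d) where ω_l are i.i.d. with ℙ(ω_l = k) = p_k > 0 for k ∈ ℕ∪{0}, Σ_k p_k = 1, and suppose Σ_k (x_l y_l)^k / (k! p_k) < ∞ converges absolutely for each l. Define f(ω, z) = exp(-‖z‖²/2) Π_{l=1}^d z_l^{ω_l} (ω_l!)^{-1/2} p_{ω_l}^{-1/2}. Then E[f(ω,x) f(ω,y)] = exp(-‖x-y‖²/2). -/
import Mathlib

open Real

lemma pi_tsum_aux (d : ℕ) (g : Fin d → ℕ → ℝ) (hg : ∀ l, Summable fun k => |g l k|) :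
    Summable (fun ω : Fin d → ℕ => ‖∏ l, g l (ω l)‖) ∧
    ∑' ω : Fin d → ℕ, ∏ l, g l (ω l) = ∏ l, ∑' k, g l k := by
  induction d with
  | zero =>
      constructor
      · simpa using (Summable.of_finite : Summable fun _ : Fin 0 → ℕ => (1:ℝ))
      · rw [tsum_eq_single (fun _ => 0) (by intro b hb; exact absurd (Subsingleton.elim b _) hb)]
        simp
  | succ n ih =>
      obtain ⟨ihs0, ihe⟩ := ih (fun l => g l.succ) (fun l => hg l.succ)
      have ihs : Summable fun ω : Fin n → ℕ => ‖∏ l : Fin n, g l.succ (ω l)‖ := ihs0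
      set e := Fin.consEquiv (fun _ : Fin (n+1) => ℕ) with he
      have hnorm1 : Summable fun k => ‖g 0 k‖ := by simpa only [Real.norm_eq_abs] using hg 0
      have hsumProd := hnorm1.mul_norm ihs
      have hcomp : ∀ q : ℕ × (Fin n → ℕ),
          (∏ l, g l (e q l)) = g 0 q.1 * ∏ l : Fin n, g l.succ (q.2 l) := by
        intro q
        rw [Fin.prod_univ_succ]
        simp [he, Fin.consEquiv]
      have htsum := tsum_mul_tsum_of_summable_norm hnorm1 ihs
      constructor
      · rw [← e.summable_iff]
        apply hsumProd.congr
        intro q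
        rw [Function.comp_apply, hcomp q, norm_mul]
      · rw [← e.tsum_eq (fun ω => ∏ l, g l (ω l))]
        calc ∑' q : ℕ × (Fin n → ℕ), ∏ l, g l (e q l)
            = ∑' q : ℕ × (Fin n → ℕ), g 0 q.1 * ∏ l : Fin n, g l.succ (q.2 l) :=
              tsum_congr hcomp
          _ = (∑' k, g 0 k) * ∑' ω : Fin n → ℕ, ∏ l : Fin n, g l.succ (ω l) := htsum.symm
          _ = ∏ l, ∑' k, g l k := by rw [ihe, Fin.prod_univ_succ]

/-- Discretely-induced random features are unbiased for the Gaussian kernel. -/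
theorem stmt9 (d : ℕ) (p : ℕ → ℝ) (hp : ∀ k, 0 < p k) (hp1 : ∑' k, p k = 1)
    (x y : Fin d → ℝ)
    (hconv : ∀ l, Summable fun k : ℕ => |x l * y l| ^ k / ((k.factorial : ℝ) * p k)) :
    let f : (Fin d → ℕ) → (Fin d → ℝ) → ℝ := fun ω z =>
      Real.exp (-(∑ l, (z l) ^ 2) / 2) *
        ∏ l, z l ^ ω l / Real.sqrt ((ω l).factorial : ℝ) / Real.sqrt (p (ω l))
    ∑' ω : Fin d → ℕ, (∏ l, p (ω l)) * (f ω x * f ω y)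
      = Real.exp (-(∑ l, (x l - y l) ^ 2) / 2) := by
  intro f
  set g : Fin d → ℕ → ℝ := fun l k => (x l * y l) ^ k / (k.factorial : ℝ) with hgdef
  set Ex := Real.exp (-(∑ l, (x l) ^ 2) / 2) with hEx
  set Ey := Real.exp (-(∑ l, (y l) ^ 2) / 2) with hEy
  have hterm : ∀ ω : Fin d → ℕ, (∏ l, p (ω l)) * (f ω x * f ω y)
      = (Ex * Ey) * ∏ l, g l (ω l) := by
    intro ω
    have hfac : ∀ l : Fin d, p (ω l) *
        ((x l ^ ω l / Real.sqrt ((ω l).factorial : ℝ) / Real.sqrt (p (ω l))) *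
         (y l ^ ω l / Real.sqrt ((ω l).factorial : ℝ) / Real.sqrt (p (ω l))))
        = g l (ω l) := by
      intro l
      have hF0 : (0:ℝ) < ((ω l).factorial : ℝ) := by
        exact_mod_cast (ω l).factorial_pos
      have h1 : Real.sqrt ((ω l).factorial : ℝ) * Real.sqrt ((ω l).factorial : ℝ)
          = ((ω l).factorial : ℝ) := Real.mul_self_sqrt hF0.le
      have h2 : Real.sqrt (p (ω l)) * Real.sqrt (p (ω l)) = p (ω l) :=
        Real.mul_self_sqrt (hp (ω l)).le
      have hs1 : Real.sqrt ((ω l).factorial : ℝ) ≠ 0 := by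
        positivity
      have hs2 : Real.sqrt (p (ω l)) ≠ 0 := by
        have := Real.sqrt_pos.mpr (hp (ω l)); positivity
      simp only [hgdef]
      rw [div_div, div_div, div_mul_div_comm, ← mul_pow,
        show (Real.sqrt ((ω l).factorial : ℝ) * Real.sqrt (p (ω l))) *
            (Real.sqrt ((ω l).factorial : ℝ) * Real.sqrt (p (ω l)))
          = ((ω l).factorial : ℝ) * p (ω l) by rw [mul_mul_mul_comm, h1, h2]]
      rw [← div_div, ← mul_div_assoc, mul_div_cancel_left₀ _ (hp (ω l)).ne']
    calc (∏ l, p (ω l)) * (f ω x * f ω y)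
        = (Ex * Ey) * ∏ l, (p (ω l) *
            ((x l ^ ω l / Real.sqrt ((ω l).factorial : ℝ) / Real.sqrt (p (ω l))) *
             (y l ^ ω l / Real.sqrt ((ω l).factorial : ℝ) / Real.sqrt (p (ω l))))) := by
          simp only [f, ← hEx, ← hEy]
          rw [Finset.prod_mul_distrib, Finset.prod_mul_distrib]
          ring
      _ = (Ex * Ey) * ∏ l, g l (ω l) := by
          rw [Finset.prod_congr rfl fun l _ => hfac l]
  have hgabs : ∀ l, Summable fun k => |g l k| := by
    intro l
    have := Real.summable_pow_div_factorial |x l * y l|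
    apply this.congr
    intro k
    simp [hgdef, abs_div, abs_pow, Nat.abs_cast]
  have hexp : ∀ l, ∑' k, g l k = Real.exp (x l * y l) := by
    intro l
    rw [Real.exp_eq_exp_ℝ, NormedSpace.exp_eq_tsum_div]
  calc ∑' ω : Fin d → ℕ, (∏ l, p (ω l)) * (f ω x * f ω y)
      = ∑' ω : Fin d → ℕ, (Ex * Ey) * ∏ l, g l (ω l) := tsum_congr hterm
    _ = (Ex * Ey) * ∑' ω : Fin d → ℕ, ∏ l, g l (ω l) := tsum_mul_left
    _ = (Ex * Ey) * ∏ l, ∑' k, g l k := by rw [(pi_tsum_aux d g hgabs).2]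
    _ = (Ex * Ey) * ∏ l, Real.exp (x l * y l) := by
        rw [Finset.prod_congr rfl fun l _ => hexp l]
    _ = (Ex * Ey) * Real.exp (∑ l, x l * y l) := by rw [← Real.exp_sum]
    _ = Real.exp (-(∑ l, (x l - y l) ^ 2) / 2) := by
        rw [hEx, hEy, ← Real.exp_add, ← Real.exp_add]
        congr 1
        have hsum : ∑ l, (x l - y l) ^ 2
            = ∑ l, ((x l) ^ 2 + (y l) ^ 2 - 2 * (x l * y l)) :=
          Finset.sum_congr rfl fun l _ => by ring
        rw [hsum, Finset.sum_sub_distrib, Finset.sum_add_distrib, ← Finset.mul_sum]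
        ring
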